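/- With the hypotheses of the ASR theorem (x^m - 1 = g(x)h(x), gcd(f_i, h) = 1 for all i = 1,...,ℓ), the minimum Hamming weight d' of the quasi-cyclic code C generated by (f_1 g, ..., f_ℓ g) satisfies d' ≥ ℓ·d, where d is the minimum distance of the cyclic code of length m generated by g(x). -/

import Mathlib

open Polynomial

/-- ASR theorem, distance part: with `x^m - 1 = g h` and `gcd(f_i, h) = 1` for
all `i`, every nonzero codeword of the 1-generator `ℓ`-quasi-cyclic code
generated by `(f_1 g, ..., f_ℓ g)` has Hamming weight at least `ℓ · d`, where
`d` is the minimum distance of the cyclic code of length `m` generated by `g`.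
Codewords are `(p f_1 g, ..., p f_ℓ g) mod (x^m - 1)` for `p ∈ F_q[x]`, and the
weight of a component is the number of nonzero coefficients of its remainder
modulo `x^m - 1`. -/
theorem asr_minimum_distance {F : Type*} [Field F] [Fintype F] (m ℓ : ℕ) (hm : 0 < m)
    (hl : 0 < ℓ) (g h : Polynomial F) (hgh : (X : Polynomial F) ^ m - 1 = g * h)
    (f : Fin ℓ → Polynomial F) (hf : ∀ i, IsCoprime (f i) h)
    (d : ℕ)
    (hd_lb : ∀ p : Polynomial F, (p * g) %ₘ ((X : Polynomial F) ^ m - 1) ≠ 0 →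
      d ≤ ((p * g) %ₘ ((X : Polynomial F) ^ m - 1)).support.card)
    (hd_attained : ∃ p : Polynomial F, (p * g) %ₘ ((X : Polynomial F) ^ m - 1) ≠ 0 ∧
      ((p * g) %ₘ ((X : Polynomial F) ^ m - 1)).support.card = d) :
    ∀ p : Polynomial F,
      (fun i => (p * f i * g) %ₘ ((X : Polynomial F) ^ m - 1) : Fin ℓ → Polynomial F) ≠ 0 →
      ℓ * d ≤ ∑ i : Fin ℓ, ((p * f i * g) %ₘ ((X : Polynomial F) ^ m - 1)).support.card := by
  intro p hp
  have hmonic : ((X : Polynomial F) ^ m - 1).Monic := by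
    simpa using monic_X_pow_sub_C (1 : F) hm.ne'
  have hgne : g ≠ 0 := by
    intro hg
    apply hmonic.ne_zero
    rw [hgh, hg, zero_mul]
  -- key: if some component vanishes, then h ∣ p, hence all components vanish
  have key : ∀ i : Fin ℓ, (p * f i * g) %ₘ ((X : Polynomial F) ^ m - 1) ≠ 0 := by
    intro i hi
    apply hp
    have hdvd : ((X : Polynomial F) ^ m - 1) ∣ p * f i * g :=
      (Polynomial.modByMonic_eq_zero_iff_dvd hmonic).mp hi
    rw [hgh] at hdvd
    have hdvd2 : h ∣ p * f i := by
      have : g * h ∣ g * (p * f i) := by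
        rw [mul_comm g (p * f i)]; exact hdvd
      exact (mul_dvd_mul_iff_left hgne).mp this
    have hdvdp : h ∣ p := ((hf i).symm).dvd_of_dvd_mul_right hdvd2
    funext j
    have : g * h ∣ p * f j * g := by
      obtain ⟨q, hq⟩ := hdvdp
      exact ⟨f j * q, by rw [hq]; ring⟩
    simpa using (Polynomial.modByMonic_eq_zero_iff_dvd hmonic).mpr (hgh ▸ this)
  have hle : ∀ i : Fin ℓ, d ≤ ((p * f i * g) %ₘ ((X : Polynomial F) ^ m - 1)).support.card := by
    intro i
    have := hd_lb (p * f i) (key i)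
    exact this
  calc ℓ * d = ∑ _i : Fin ℓ, d := by simp [Finset.sum_const, mul_comm]
    _ ≤ _ := Finset.sum_le_sum fun i _ => hle i
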